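/- arXiv:2111.15484 — 2 statements merged into one kernel-verified Lean document; each statement's English description precedes it below -/
import Mathlib

section
/- For every positive integer n, the number of additive subgroups of ℤ × ℤ of index n equals σ(n), the sum of the positive divisors of n. -/
/-- The sublattice of `ℤ × ℤ` generated by `(a, b)` and `(0, d)`. -/
def LatSG (a d b : ℕ) : AddSubgroup (ℤ × ℤ) where
  carrier := {p | ∃ k m : ℤ, p = (k * a, k * b + m * d)}
  zero_mem' := ⟨0, 0, by simp; rfl⟩
  add_mem' := by
    rintro p q ⟨k, m, rfl⟩ ⟨k', m', rfl⟩
    exact ⟨k + k', m + m', by rw [Prod.mk_add_mk, Prod.mk.injEq]; constructor <;> ring⟩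
  neg_mem' := by
    rintro p ⟨k, m, rfl⟩
    exact ⟨-k, -m, by rw [Prod.neg_mk, Prod.mk.injEq]; constructor <;> ring⟩

lemma mem_LatSG {a d b : ℕ} {p : ℤ × ℤ} :
    p ∈ LatSG a d b ↔ ∃ k m : ℤ, p = (k * a, k * b + m * d) := Iff.rfl

lemma LatSG_index (a d b : ℕ) (ha : 0 < a) (hd : 0 < d) :
    (LatSG a d b).index = a * d := by
  haveI : NeZero a := ⟨ha.ne'⟩
  haveI : NeZero d := ⟨hd.ne'⟩
  have ha' : (a : ℤ) ≠ 0 := by exact_mod_cast ha.ne'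
  set F : ℤ × ℤ → ZMod a × ZMod d :=
    fun p => ((p.1 : ZMod a), ((p.2 - b * (p.1 / a) : ℤ) : ZMod d)) with hF
  have ediv_eq : ∀ p q : ℤ × ℤ, ∀ k : ℤ, q.1 - p.1 = k * a → q.1 / a = p.1 / a + k := by
    intro p q k hk
    have : q.1 = p.1 + k * a := by linarith
    rw [this, Int.add_mul_ediv_right _ _ ha']
  have key : ∀ p q : ℤ × ℤ, F p = F q ↔ q - p ∈ LatSG a d b := by
    intro p q
    simp only [hF, Prod.mk.injEq, ZMod.intCast_eq_intCast_iff, Int.modEq_iff_dvd]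
    constructor
    · rintro ⟨h1, h2⟩
      obtain ⟨k, hk⟩ := h1
      have hq : q.1 / a = p.1 / a + k := ediv_eq p q k (by linarith [hk])
      obtain ⟨m, hm⟩ := h2
      refine ⟨k, m, ?_⟩
      rw [Prod.sub_def, Prod.mk.injEq]
      constructor
      · linarith [hk]
      · rw [hq] at hm; push_cast at hm ⊢; linarith [hm]
    · rintro ⟨k, m, hp⟩
      rw [Prod.sub_def, Prod.mk.injEq] at hp
      obtain ⟨h1, h2⟩ := hp
      have hq : q.1 / a = p.1 / a + k := ediv_eq p q k (by linarith)
      refine ⟨⟨k, by linarith⟩, ⟨m, ?_⟩⟩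
      rw [hq]; push_cast; linarith
  have hresp : ∀ p q : ℤ × ℤ,
      (QuotientAddGroup.leftRel (LatSG a d b)).r p q → F p = F q := by
    intro p q h
    rw [QuotientAddGroup.leftRel_apply] at h
    rw [key]
    rwa [neg_add_eq_sub] at h
  set Fbar : (ℤ × ℤ) ⧸ LatSG a d b → ZMod a × ZMod d := Quotient.lift F hresp with hFbar
  have hinj : Function.Injective Fbar := by
    intro x y
    induction x using QuotientAddGroup.induction_on with | H p =>
    induction y using QuotientAddGroup.induction_on with | H q =>
    intro h
    have : F p = F q := h
    rw [key] at this
    rw [QuotientAddGroup.eq, neg_add_eq_sub]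
    exact this
  have hsurj : Function.Surjective Fbar := by
    rintro ⟨u, v⟩
    refine ⟨QuotientAddGroup.mk ((u.val : ℤ), (v.val : ℤ) + b * ((u.val : ℤ) / a)), ?_⟩
    show F _ = _
    simp only [hF, Prod.mk.injEq]
    constructor
    · push_cast; exact ZMod.natCast_rightInverse u
    · have : ((v.val : ℤ) + b * ((u.val : ℤ) / a) - b * ((u.val : ℤ) / a)) = (v.val : ℤ) := by ring
      rw [this]; push_cast; exact ZMod.natCast_rightInverse v
  show Nat.card ((ℤ × ℤ) ⧸ LatSG a d b) = a * d
  rw [Nat.card_eq_of_bijective Fbar ⟨hinj, hsurj⟩, Nat.card_prod, Nat.card_zmod, Nat.card_zmod]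

lemma exists_param (n : ℕ) (hn : 0 < n) (H : AddSubgroup (ℤ × ℤ)) (hH : H.index = n) :
    ∃ a d b : ℕ, 0 < a ∧ 0 < d ∧ b < d ∧ a * d = n ∧ H = LatSG a d b := by
  haveI : H.FiniteIndex := ⟨by omega⟩
  have hsmul : ∀ p : ℤ × ℤ, n • p ∈ H := by
    intro p; rw [← hH]; exact H.nsmul_index_mem p
  have h10 : (((n : ℤ)), (0 : ℤ)) ∈ H := by simpa [Prod.smul_mk] using hsmul (1, 0)
  have h01 : ((0 : ℤ), ((n : ℤ))) ∈ H := by simpa [Prod.smul_mk] using hsmul (0, 1)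
  obtain ⟨a₀, hA⟩ := Int.subgroup_cyclic (H.map (AddMonoidHom.fst ℤ ℤ))
  have memA : ∀ x : ℤ, x ∈ H.map (AddMonoidHom.fst ℤ ℤ) ↔ a₀ ∣ x := by
    intro x
    rw [hA, AddSubgroup.mem_closure_singleton]
    constructor
    · rintro ⟨k, rfl⟩; exact Dvd.intro_left k (zsmul_eq_mul a₀ k).symm
    · rintro ⟨k, rfl⟩; exact ⟨k, by push_cast [zsmul_eq_mul]; ring⟩
  obtain ⟨d₀, hD⟩ := Int.subgroup_cyclic (H.comap (AddMonoidHom.inr ℤ ℤ))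
  have memD : ∀ y : ℤ, ((0 : ℤ), y) ∈ H ↔ d₀ ∣ y := by
    intro y
    have : ((0 : ℤ), y) ∈ H ↔ y ∈ H.comap (AddMonoidHom.inr ℤ ℤ) := by
      simp [AddSubgroup.mem_comap]
    rw [this, hD, AddSubgroup.mem_closure_singleton]
    constructor
    · rintro ⟨k, rfl⟩; exact Dvd.intro_left k (zsmul_eq_mul d₀ k).symm
    · rintro ⟨k, rfl⟩; exact ⟨k, by push_cast [zsmul_eq_mul]; ring⟩
  have ha₀n : a₀ ∣ (n : ℤ) := (memA n).mp ⟨((n : ℤ), 0), h10, rfl⟩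
  have hd₀n : d₀ ∣ (n : ℤ) := (memD n).mp h01
  have hn' : (n : ℤ) ≠ 0 := by exact_mod_cast hn.ne'
  have ha₀ : a₀ ≠ 0 := by rintro rfl; exact hn' (zero_dvd_iff.mp ha₀n)
  have hd₀ : d₀ ≠ 0 := by rintro rfl; exact hn' (zero_dvd_iff.mp hd₀n)
  set a : ℕ := a₀.natAbs with haa
  set d : ℕ := d₀.natAbs with hdd
  have ha : 0 < a := Int.natAbs_pos.mpr ha₀
  have hd : 0 < d := Int.natAbs_pos.mpr hd₀
  have hd' : (0 : ℤ) < (d : ℤ) := by exact_mod_cast hd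
  have hdH : ((0 : ℤ), (d : ℤ)) ∈ H := (memD d).mpr (Int.dvd_natAbs.mpr dvd_rfl)
  obtain ⟨p, hpH, hp1⟩ := (memA a).mpr (Int.dvd_natAbs.mpr dvd_rfl)
  set b₀ : ℤ := p.2 with hb₀
  have habH : ((a : ℤ), b₀) ∈ H := by
    have : p = ((a : ℤ), b₀) := Prod.ext hp1 rfl
    rwa [this] at hpH
  set b : ℕ := (b₀ % d).toNat with hbb
  have hbmod : (b : ℤ) = b₀ % d := Int.toNat_of_nonneg (Int.emod_nonneg b₀ hd'.ne')
  have hb : b < d := by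
    have := Int.emod_lt_of_pos b₀ hd'
    omega
  have habH' : ((a : ℤ), (b : ℤ)) ∈ H := by
    have h2 : ((0 : ℤ), (b₀ / d) * d) ∈ H := by
      have := H.zsmul_mem hdH (b₀ / d)
      simpa [Prod.smul_mk, zsmul_eq_mul] using this
    have := H.sub_mem habH h2
    have heq : (((a : ℤ), b₀) - ((0 : ℤ), (b₀ / d) * d)) = ((a : ℤ), (b : ℤ)) := by
      rw [Prod.sub_def, Prod.mk.injEq]
      constructor
      · ring
      · rw [hbmod, Int.emod_def]; ring
    rwa [heq] at this
  have hHL : H = LatSG a d b := by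
    ext q
    obtain ⟨x, y⟩ := q
    rw [mem_LatSG]
    constructor
    · intro hxy
      have hx : a₀ ∣ x := (memA x).mp ⟨(x, y), hxy, rfl⟩
      have hx' : (a : ℤ) ∣ x := Int.natAbs_dvd.mpr hx
      obtain ⟨k, hk⟩ := hx'
      have h2 : ((0 : ℤ), y - k * b) ∈ H := by
        have hk' : k • ((a : ℤ), (b : ℤ)) ∈ H := H.zsmul_mem habH' k
        have := H.sub_mem hxy hk'
        have heq : ((x, y) - k • ((a : ℤ), (b : ℤ))) = ((0 : ℤ), y - k * b) := by
          simp only [Prod.smul_mk, smul_eq_mul, Prod.sub_def, Prod.mk.injEq]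
          constructor
          · linarith
          · trivial
        rwa [heq] at this
      have hy : (d : ℤ) ∣ y - k * b := Int.natAbs_dvd.mpr ((memD _).mp h2)
      obtain ⟨m, hm⟩ := hy
      exact ⟨k, m, by rw [Prod.mk.injEq]; constructor <;> linarith⟩
    · rintro ⟨k, m, hq⟩
      rw [hq]
      have h1 := H.zsmul_mem habH' k
      have h2 := H.zsmul_mem hdH m
      have hmem := H.add_mem h1 h2
      have heq : k • ((a : ℤ), (b : ℤ)) + m • ((0 : ℤ), (d : ℤ))
          = ((k * a : ℤ), (k * b + m * d : ℤ)) := by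
        simp only [Prod.smul_mk, smul_eq_mul, Prod.mk_add_mk, Prod.mk.injEq]
        exact ⟨by ring, trivial⟩
      rwa [heq] at hmem
  refine ⟨a, d, b, ha, hd, hb, ?_, hHL⟩
  rw [hHL, LatSG_index a d b ha hd] at hH
  exact hH

lemma LatSG_inj {a a' d d' b b' : ℕ} (ha : 0 < a) (ha' : 0 < a')
    (hd : 0 < d) (hd' : 0 < d') (hb : b < d) (hb' : b' < d')
    (h : LatSG a d b = LatSG a' d' b') : a = a' ∧ d = d' ∧ b = b' := by
  have haz : (a : ℤ) ≠ 0 := by exact_mod_cast ha.ne'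
  have haz' : (a' : ℤ) ≠ 0 := by exact_mod_cast ha'.ne'
  have mem0 : ∀ (u e v : ℕ) (z : ℤ), 0 < u → ((0 : ℤ), z) ∈ LatSG u e v → (e : ℤ) ∣ z := by
    rintro u e v z hu ⟨k, m, hkm⟩
    rw [Prod.mk.injEq] at hkm
    obtain ⟨hk1, hk2⟩ := hkm
    have huz : (u : ℤ) ≠ 0 := by exact_mod_cast hu.ne'
    have hk : k = 0 := by
      rcases mul_eq_zero.mp hk1.symm with hh | hh
      · exact hh
      · exact absurd hh huz
    exact ⟨m, by rw [hk] at hk2; linarith⟩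
  have memfst : ∀ (u e v : ℕ) (z w : ℤ), (z, w) ∈ LatSG u e v → (u : ℤ) ∣ z := by
    rintro u e v z w ⟨k, m, hkm⟩
    rw [Prod.mk.injEq] at hkm
    exact ⟨k, by linarith [hkm.1]⟩
  have h1 : (d' : ℤ) ∣ (d : ℤ) :=
    mem0 a' d' b' d ha' (h ▸ (⟨0, 1, by simp⟩ : ((0 : ℤ), (d : ℤ)) ∈ LatSG a d b))
  have h2 : (d : ℤ) ∣ (d' : ℤ) :=
    mem0 a d b d' ha (h.symm ▸ (⟨0, 1, by simp⟩ : ((0 : ℤ), (d' : ℤ)) ∈ LatSG a' d' b'))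
  have hdeq : d = d' := by
    have := Int.dvd_antisymm (by positivity) (by positivity) h2 h1
    exact_mod_cast this
  subst hdeq
  have h3 : (a' : ℤ) ∣ (a : ℤ) :=
    memfst a' d b' a b (h ▸ (⟨1, 0, by simp⟩ : ((a : ℤ), (b : ℤ)) ∈ LatSG a d b))
  have h4 : (a : ℤ) ∣ (a' : ℤ) :=
    memfst a d b a' b' (h.symm ▸ (⟨1, 0, by simp⟩ : ((a' : ℤ), (b' : ℤ)) ∈ LatSG a' d b'))
  have haeq' : a = a' := by
    have := Int.dvd_antisymm (by positivity) (by positivity) h4 h3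
    exact_mod_cast this
  subst haeq'
  refine ⟨rfl, rfl, ?_⟩
  -- b = b'
  have : ((a : ℤ), (b' : ℤ)) ∈ LatSG a d b := by
    rw [h]; exact ⟨1, 0, by simp⟩
  obtain ⟨k, m, hkm⟩ := this
  rw [Prod.mk.injEq] at hkm
  obtain ⟨h5, h6⟩ := hkm
  have hk1 : k = 1 := by
    have : (k - 1) * (a : ℤ) = 0 := by ring_nf; linarith
    rcases mul_eq_zero.mp this with hh | hh
    · linarith
    · exact absurd hh haz
  subst hk1
  have hm : m = 0 := by
    have hbz : (b : ℤ) < d := by exact_mod_cast hb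
    have hbz' : (b' : ℤ) < d := by exact_mod_cast hb'
    have hb0 : (0 : ℤ) ≤ b := by positivity
    have hb0' : (0 : ℤ) ≤ b' := by positivity
    have hdz : (0 : ℤ) < d := by exact_mod_cast hd
    have hmd : m * d = (b' : ℤ) - b := by linarith
    rcases lt_trichotomy m 0 with hh | hh | hh
    · nlinarith
    · exact hh
    · nlinarith
  subst hm
  have : (b : ℤ) = b' := by linarith
  exact_mod_cast this

/-- **Counting sublattices of `ℤ × ℤ` of index `n`.** For every positive integer
`n`, the number of additive subgroups of `ℤ × ℤ` of index `n` equals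
`σ(n) = ∑_{d ∣ n} d`, the sum of the positive divisors of `n`. -/
theorem stmt_3 (n : ℕ) (hn : 0 < n) :
    {H : AddSubgroup (ℤ × ℤ) | H.index = n}.ncard = ∑ d ∈ n.divisors, d := by
  classical
  set P : (Σ _ : ℕ, ℕ) → AddSubgroup (ℤ × ℤ) := fun x => LatSG (n / x.1) x.1 x.2 with hP
  set T : Finset (Σ _ : ℕ, ℕ) := n.divisors.sigma (fun d => Finset.range d) with hT
  have hmemT : ∀ x : (Σ _ : ℕ, ℕ), x ∈ T ↔ (x.1 ∣ n ∧ x.2 < x.1) := by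
    rintro ⟨d, b⟩
    simp [hT, Finset.mem_sigma, Nat.mem_divisors, Finset.mem_range, hn.ne', and_assoc]
  have hset : {H : AddSubgroup (ℤ × ℤ) | H.index = n} = P '' ↑T := by
    ext H
    simp only [Set.mem_setOf_eq, Set.mem_image, Finset.mem_coe]
    constructor
    · intro hH
      obtain ⟨a, d, b, ha, hd, hb, hadn, rfl⟩ := exists_param n hn H hH
      have hda : n / d = a := by rw [← hadn, Nat.mul_div_cancel _ hd]
      refine ⟨⟨d, b⟩, (hmemT ⟨d, b⟩).mpr ⟨Dvd.intro_left a hadn, hb⟩, ?_⟩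
      simp only [hP, hda]
    · rintro ⟨⟨d, b⟩, hmem, rfl⟩
      obtain ⟨hdvd, hb⟩ := (hmemT ⟨d, b⟩).mp hmem
      have hd : 0 < d := Nat.pos_of_dvd_of_pos hdvd hn
      have ha : 0 < n / d := Nat.div_pos (Nat.le_of_dvd hn hdvd) hd
      simp only [hP]
      rw [LatSG_index _ _ _ ha hd, Nat.div_mul_cancel hdvd]
  have hinj : Set.InjOn P ↑T := by
    rintro ⟨d, b⟩ hx ⟨d', b'⟩ hy hPxy
    obtain ⟨hdvd, hb⟩ := (hmemT ⟨d, b⟩).mp hx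
    obtain ⟨hdvd', hb'⟩ := (hmemT ⟨d', b'⟩).mp hy
    have hd : 0 < d := Nat.pos_of_dvd_of_pos hdvd hn
    have hd' : 0 < d' := Nat.pos_of_dvd_of_pos hdvd' hn
    have ha : 0 < n / d := Nat.div_pos (Nat.le_of_dvd hn hdvd) hd
    have ha' : 0 < n / d' := Nat.div_pos (Nat.le_of_dvd hn hdvd') hd'
    obtain ⟨_, hde, hbe⟩ := LatSG_inj ha ha' hd hd' hb hb' hPxy
    subst hde; subst hbe; rfl
  rw [hset, Set.ncard_image_of_injOn hinj, Set.ncard_coe_finset, hT, Finset.card_sigma]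
  simp [Finset.card_range]
end

section
/- Let C and D be ℤ-linearly independent vectors in ℤ × ℤ and let K be the additive subgroup generated by C and D. For every positive integer n, the number of additive subgroups L of ℤ × ℤ with L ≤ K whose index in K equals n is exactly σ(n), the sum of the positive divisors of n. -/
open AddSubgroup

private lemma index_zmul (a : ℕ) : (zmultiples (a : ℤ)).index = a := by
  rw [AddSubgroup.index_eq_card, Nat.card_congr (Int.quotientZMultiplesNatEquivZMod a).toEquiv,
    Nat.card_zmod]

private lemma exists_zmul (H : AddSubgroup ℤ) : ∃ k : ℕ, H = zmultiples (k : ℤ) := by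
  obtain ⟨a, rfl⟩ := Int.subgroup_cyclic H
  refine ⟨a.natAbs, ?_⟩
  ext x
  simp only [AddSubgroup.mem_closure_singleton, Int.mem_zmultiples_iff, Int.natAbs_dvd]
  constructor
  · rintro ⟨k, rfl⟩; exact Dvd.intro_left k rfl
  · rintro ⟨k, rfl⟩; exact ⟨k, by rw [smul_eq_mul, mul_comm]⟩

private lemma index_eq_mul (H : AddSubgroup (ℤ × ℤ)) :
    H.index = (H.comap (AddMonoidHom.inr ℤ ℤ)).index * (H.map (AddMonoidHom.fst ℤ ℤ)).index := by
  set N : AddSubgroup (ℤ × ℤ) := (AddMonoidHom.fst ℤ ℤ).ker with hN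
  have hrange : (AddMonoidHom.fst ℤ ℤ).range = ⊤ := by
    rw [AddMonoidHom.range_eq_top]
    exact fun x => ⟨(x, 0), rfl⟩
  have h2 : (H.map (AddMonoidHom.fst ℤ ℤ)).index = (H ⊔ N).index := by
    rw [AddSubgroup.index_map, hrange, AddSubgroup.index_top, mul_one]
  have hmap : (⊤ : AddSubgroup ℤ).map (AddMonoidHom.inr ℤ ℤ) = N := by
    ext ⟨x, y⟩
    simp [hN, AddMonoidHom.mem_ker, Prod.ext_iff, eq_comm, AddSubgroup.mem_prod]
  have h4 : (H.comap (AddMonoidHom.inr ℤ ℤ)).index = H.relIndex N := by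
    have := AddSubgroup.relIndex_comap (AddMonoidHom.inr ℤ ℤ) (H := H) (⊤ : AddSubgroup ℤ)
    rwa [AddSubgroup.relIndex_top_right, hmap] at this
  have h3 : H.relIndex (H ⊔ N) = H.relIndex N := by
    rw [sup_comm]; exact AddSubgroup.relIndex_sup_right N H
  rw [← AddSubgroup.relIndex_mul_index (le_sup_left : H ≤ H ⊔ N), h3, h4, h2]



private lemma mem_T (d a b x y : ℤ) :
    (x, y) ∈ AddSubgroup.closure ({(d, b), (0, a)} : Set (ℤ × ℤ)) ↔
      ∃ s t : ℤ, s * d = x ∧ s * b + t * a = y := by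
  rw [AddSubgroup.mem_closure_pair]
  constructor
  · rintro ⟨m, k, h⟩
    exact ⟨m, k, by simpa [Prod.ext_iff] using h⟩
  · rintro ⟨s, t, h1, h2⟩
    exact ⟨s, t, by simp [Prod.ext_iff, h1.symm, h2.symm]⟩

private lemma comap_T (d a b : ℤ) (hd : d ≠ 0) :
    (AddSubgroup.closure ({(d, b), (0, a)} : Set (ℤ × ℤ))).comap (AddMonoidHom.inr ℤ ℤ) = zmultiples a := by
  ext y
  rw [AddSubgroup.mem_comap]
  show ((0 : ℤ), y) ∈ _ ↔ _
  rw [mem_T, Int.mem_zmultiples_iff]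
  constructor
  · rintro ⟨s, t, h1, h2⟩
    have hs : s = 0 := by
      rcases mul_eq_zero.1 h1 with h | h
      · exact h
      · exact absurd h hd
    subst hs
    exact ⟨t, by linarith⟩
  · rintro ⟨t, rfl⟩
    exact ⟨0, t, by ring, by ring⟩

private lemma map_T (d a b : ℤ) :
    (AddSubgroup.closure ({(d, b), (0, a)} : Set (ℤ × ℤ))).map (AddMonoidHom.fst ℤ ℤ) = zmultiples d := by
  rw [AddMonoidHom.map_closure]
  have him : (AddMonoidHom.fst ℤ ℤ) '' {(d, b), (0, a)} = {d, 0} := by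
    rw [Set.image_insert_eq, Set.image_singleton]; rfl
  rw [him]
  ext x
  rw [AddSubgroup.mem_closure_pair, Int.mem_zmultiples_iff]
  constructor
  · rintro ⟨m, k, h⟩
    exact ⟨m, by simp [smul_eq_mul] at h; linarith [h]⟩
  · rintro ⟨m, rfl⟩
    exact ⟨m, 0, by simp [smul_eq_mul, mul_comm]⟩

private lemma index_T (d a : ℕ) (b : ℤ) (hd : d ≠ 0) :
    (AddSubgroup.closure ({((d : ℤ), b), (0, (a : ℤ))} : Set (ℤ × ℤ))).index = a * d := by
  rw [index_eq_mul, comap_T _ _ _ (by exact_mod_cast hd), map_T, index_zmul, index_zmul]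



private lemma surj_T (n : ℕ) (hn : 0 < n) (H : AddSubgroup (ℤ × ℤ)) (hH : H.index = n) :
    ∃ d b : ℕ, d ∣ n ∧ b < n / d ∧
      H = AddSubgroup.closure {((d : ℤ), (b : ℤ)), (0, ((n / d : ℕ) : ℤ))} := by
  obtain ⟨d, hd⟩ := exists_zmul (H.map (AddMonoidHom.fst ℤ ℤ))
  obtain ⟨a, ha⟩ := exists_zmul (H.comap (AddMonoidHom.inr ℤ ℤ))
  have hkey := index_eq_mul H
  rw [hH, hd, ha, index_zmul, index_zmul] at hkey
  have hd0 : d ≠ 0 := by rintro rfl; omega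
  have ha0 : 0 < a := by rcases Nat.eq_zero_or_pos a with h | h; · rw [h] at hkey; omega
                         · exact h
  have hdvd : d ∣ n := ⟨a, by rw [hkey, Nat.mul_comm]⟩
  have hna : n / d = a := by rw [hkey, Nat.mul_div_cancel _ (Nat.pos_of_ne_zero hd0)]
  have h1 : (d : ℤ) ∈ H.map (AddMonoidHom.fst ℤ ℤ) := by
    rw [hd]; exact mem_zmultiples _
  obtain ⟨⟨x1, b₀⟩, hxH, hx⟩ := h1
  have hx1 : x1 = (d : ℤ) := hx
  subst hx1
  have haH : ((0 : ℤ), (a : ℤ)) ∈ H := by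
    have : (a : ℤ) ∈ H.comap (AddMonoidHom.inr ℤ ℤ) := by rw [ha]; exact mem_zmultiples _
    exact this
  have haZ : (0 : ℤ) < (a : ℤ) := by exact_mod_cast ha0
  set b : ℤ := b₀ % (a : ℤ) with hbdef
  have hb0 : 0 ≤ b := Int.emod_nonneg _ (by positivity)
  have hba : b < (a : ℤ) := Int.emod_lt_of_pos _ haZ
  have hbH : ((d : ℤ), b) ∈ H := by
    have hsub : ((d : ℤ), b₀) - (b₀ / (a : ℤ)) • ((0 : ℤ), (a : ℤ)) ∈ H :=
      sub_mem hxH (zsmul_mem haH _)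
    have : ((d : ℤ), b₀) - (b₀ / (a : ℤ)) • ((0 : ℤ), (a : ℤ)) = ((d : ℤ), b) := by
      rw [hbdef, Int.emod_def]
      simp [Prod.ext_iff, smul_eq_mul]
      ring
    rwa [this] at hsub
  refine ⟨d, b.toNat, hdvd, by omega, ?_⟩
  have hcast1 : ((b.toNat : ℕ) : ℤ) = b := Int.toNat_of_nonneg hb0
  rw [hna, hcast1]
  apply le_antisymm
  · intro p hp
    have hp1 : p.1 ∈ zmultiples ((d : ℕ) : ℤ) := by
      rw [← hd]; exact ⟨p, hp, rfl⟩
    obtain ⟨s, hs⟩ := hp1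
    simp only [smul_eq_mul] at hs
    have h2 : p - s • ((d : ℤ), b) ∈ H := sub_mem hp (zsmul_mem hbH s)
    have h2' : ((0 : ℤ), p.2 - s * b) ∈ H := by
      have : p - s • ((d : ℤ), b) = ((0 : ℤ), p.2 - s * b) := by
        simp [Prod.ext_iff, smul_eq_mul, ← hs]
      rwa [this] at h2
    have h3 : p.2 - s * b ∈ zmultiples ((a : ℕ) : ℤ) := by rw [← ha]; exact h2'
    obtain ⟨t, ht⟩ := h3
    simp only [smul_eq_mul] at ht
    have hpeq : p = ((p.1 : ℤ), p.2) := rfl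
    rw [hpeq, mem_T]
    exact ⟨s, t, hs, by linarith⟩
  · rw [AddSubgroup.closure_le]
    rintro x (rfl | rfl)
    · exact hbH
    · exact haH

private lemma inj_T (n : ℕ) (hn : 0 < n) (d d' b b' : ℕ) (hd : d ∣ n) (hd' : d' ∣ n)
    (hb : b < n / d) (hb' : b' < n / d')
    (h : AddSubgroup.closure {((d : ℤ), (b : ℤ)), (0, ((n / d : ℕ) : ℤ))}
       = AddSubgroup.closure {((d' : ℤ), (b' : ℤ)), (0, ((n / d' : ℕ) : ℤ))}) :
    d = d' ∧ b = b' := by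
  have hd0 : d ≠ 0 := by rintro rfl; simp at hb
  have hd0' : d' ≠ 0 := by rintro rfl; simp at hb'
  have hmap := congrArg (fun X : AddSubgroup (ℤ × ℤ) => X.map (AddMonoidHom.fst ℤ ℤ)) h
  simp only [map_T] at hmap
  have hdd : d = d' := by
    have h1 : ((d : ℤ)) ∈ zmultiples ((d' : ℕ) : ℤ) := hmap ▸ mem_zmultiples _
    have h2 : ((d' : ℤ)) ∈ zmultiples ((d : ℕ) : ℤ) := hmap ▸ mem_zmultiples _
    rw [Int.mem_zmultiples_iff, Int.natCast_dvd_natCast] at h1 h2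
    exact Nat.dvd_antisymm h2 h1
  subst hdd
  refine ⟨rfl, ?_⟩
  have hmem : ((d : ℤ), (b : ℤ)) ∈
      AddSubgroup.closure ({((d : ℤ), (b' : ℤ)), (0, ((n / d : ℕ) : ℤ))} : Set (ℤ × ℤ)) := by
    rw [← h]
    exact AddSubgroup.subset_closure (by simp)
  rw [mem_T] at hmem
  obtain ⟨s, t, h1, h2⟩ := hmem
  have hs1 : s = 1 := by
    have : (d : ℤ) ≠ 0 := by exact_mod_cast hd0
    have h1' : s * (d : ℤ) = 1 * (d : ℤ) := by rw [one_mul, h1]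
    exact mul_right_cancel₀ this h1'
  subst hs1
  rw [one_mul] at h2
  set A : ℤ := ((n / d : ℕ) : ℤ) with hA
  have hbA : (b : ℤ) < A := by rw [hA]; exact_mod_cast hb
  have hbA' : (b' : ℤ) < A := by rw [hA]; exact_mod_cast hb'
  have hb0 : (0 : ℤ) ≤ (b : ℤ) := Int.natCast_nonneg _
  have hb0' : (0 : ℤ) ≤ (b' : ℤ) := Int.natCast_nonneg _
  have ht : t = 0 := by
    rcases lt_trichotomy t 0 with hlt | rfl | hgt
    · nlinarith [Int.le_sub_one_of_lt hlt]
    · rfl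
    · nlinarith [Int.add_one_le_of_lt hgt]
  subst ht
  have : (b : ℤ) = (b' : ℤ) := by linarith
  exact_mod_cast this


private lemma count_top (n : ℕ) (hn : 0 < n) :
    Nat.card {H : AddSubgroup (ℤ × ℤ) // H.index = n} = ∑ d ∈ n.divisors, d := by
  classical
  have hcard : (n.divisors.sigma fun d => Finset.range (n / d)).card = ∑ d ∈ n.divisors, d := by
    rw [Finset.card_sigma]
    simp only [Finset.card_range]
    exact Nat.sum_div_divisors n id
  rw [← hcard, ← Nat.card_eq_finsetCard]
  apply Nat.card_congr
  have hidx : ∀ p : {x // x ∈ n.divisors.sigma fun d => Finset.range (n / d)},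
      (AddSubgroup.closure
        ({((p.1.1 : ℤ), (p.1.2 : ℤ)), (0, ((n / p.1.1 : ℕ) : ℤ))} : Set (ℤ × ℤ))).index = n := by
    rintro ⟨⟨d, b⟩, hp⟩
    rw [Finset.mem_sigma, Nat.mem_divisors, Finset.mem_range] at hp
    have hd0 : d ≠ 0 := fun h => by subst h; exact hp.1.2 (Nat.eq_zero_of_zero_dvd hp.1.1)
    rw [index_T d (n / d) _ hd0]
    exact Nat.div_mul_cancel hp.1.1
  refine (Equiv.ofBijective (fun p =>
    ⟨AddSubgroup.closure {((p.1.1 : ℤ), (p.1.2 : ℤ)), (0, ((n / p.1.1 : ℕ) : ℤ))}, hidx p⟩) ?_).symm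
  constructor
  · rintro ⟨⟨d, b⟩, hp⟩ ⟨⟨d', b'⟩, hp'⟩ hEq
    rw [Finset.mem_sigma, Nat.mem_divisors, Finset.mem_range] at hp hp'
    have := inj_T n hn d d' b b' hp.1.1 hp'.1.1 hp.2 hp'.2 (by
      simpa using congrArg Subtype.val hEq)
    simp only [Subtype.mk.injEq, Sigma.mk.inj_iff]
    exact ⟨by rw [this.1], heq_of_eq (by rw [this.2])⟩
  · rintro ⟨H, hH⟩
    obtain ⟨d, b, hdvd, hb, hHeq⟩ := surj_T n hn H hH
    refine ⟨⟨⟨d, b⟩, ?_⟩, ?_⟩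
    · rw [Finset.mem_sigma, Nat.mem_divisors, Finset.mem_range]
      exact ⟨⟨hdvd, hn.ne'⟩, hb⟩
    · exact Subtype.ext hHeq.symm


/-- **Counting sublattices of a rank-2 lattice.** Let `C, D ∈ ℤ × ℤ` be
`ℤ`-linearly independent and let `K` be the additive subgroup generated by
`C` and `D`. For every positive integer `n`, the number of additive subgroups
`L ≤ K` of `ℤ × ℤ` whose index in `K` equals `n` is exactly
`σ(n) = ∑_{d ∣ n} d`. -/
theorem stmt_8 (C D : ℤ × ℤ)
    (hCD : ∀ a b : ℤ, a • C + b • D = 0 → a = 0 ∧ b = 0)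
    (n : ℕ) (hn : 0 < n) :
    {L : AddSubgroup (ℤ × ℤ) | L ≤ AddSubgroup.closure {C, D} ∧
      L.relIndex (AddSubgroup.closure {C, D}) = n}.ncard = ∑ d ∈ n.divisors, d := by
  set K : AddSubgroup (ℤ × ℤ) := AddSubgroup.closure {C, D} with hK
  set f : (ℤ × ℤ) →+ (ℤ × ℤ) :=
    ((zmultiplesHom _ C).comp (AddMonoidHom.fst ℤ ℤ)) +
      ((zmultiplesHom _ D).comp (AddMonoidHom.snd ℤ ℤ)) with hf
  have hfapp : ∀ p : ℤ × ℤ, f p = p.1 • C + p.2 • D := fun p => rfl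
  have hinj : Function.Injective f := by
    intro p q hpq
    have hsub : (p.1 - q.1) • C + (p.2 - q.2) • D = 0 := by
      have h := hpq
      rw [hfapp, hfapp] at h
      rw [sub_smul, sub_smul, sub_add_sub_comm, h, sub_self]
    obtain ⟨h1, h2⟩ := hCD _ _ hsub
    have : p.1 = q.1 := by omega
    have : p.2 = q.2 := by omega
    exact Prod.ext ‹p.1 = q.1› ‹p.2 = q.2›
  have hker : f.ker = ⊥ := (AddMonoidHom.ker_eq_bot_iff f).mpr hinj
  have hrange : f.range = K := by
    apply le_antisymm
    · rintro _ ⟨p, rfl⟩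
      rw [hfapp]
      exact add_mem (zsmul_mem (AddSubgroup.subset_closure (by simp)) _)
        (zsmul_mem (AddSubgroup.subset_closure (by simp)) _)
    · rw [hK, AddSubgroup.closure_le]
      rintro x (rfl | rfl)
      · exact ⟨(1, 0), by rw [hfapp]; simp⟩
      · exact ⟨(0, 1), by rw [hfapp]; simp⟩
  rw [← Nat.card_coe_set_eq, ← count_top n hn]
  apply Nat.card_congr
  refine ⟨fun L => ⟨L.1.comap f, ?_⟩, fun H => ⟨H.1.map f, ?_, ?_⟩, ?_, ?_⟩
  · rw [AddSubgroup.index_comap, hrange]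
    exact L.2.2
  · rw [← hrange]
    exact AddSubgroup.map_le_range f H.1
  · show (H.1.map f).relIndex K = n
    rw [← hrange, ← AddSubgroup.index_comap, AddSubgroup.comap_map_eq, hker, sup_bot_eq]
    exact H.2
  · rintro ⟨L, hL1, hL2⟩
    apply Subtype.ext
    show (L.comap f).map f = L
    rw [AddSubgroup.map_comap_eq, hrange]
    exact inf_eq_right.2 hL1
  · rintro ⟨H, hH⟩
    apply Subtype.ext
    show (H.map f).comap f = H
    rw [AddSubgroup.comap_map_eq, hker, sup_bot_eq]
end
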